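/- Let K be a compact Hausdorff space and let e : ℕ → K be a topological embedding with dense image (a compactification of ℕ). If K is an F-space, i.e., any two disjoint open Fσ-subsets of K have disjoint closures, then the canonical continuous surjection from the Stone–Čech compactification βℕ onto K extending e is a homeomorphism. -/
import Mathlib


/-- A set is Fσ if it is a countable union of closed sets. -/
def IsFSigma {K : Type} [TopologicalSpace K] (s : Set K) : Prop :=
  ∃ f : ℕ → Set K, (∀ n, IsClosed (f n)) ∧ s = ⋃ n, f n

/-- A compact Hausdorff space is an F-space if any two disjoint open Fσ-subsets have
disjoint closures. -/
def IsFSpace (K : Type) [TopologicalSpace K] : Prop :=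
  ∀ U V : Set K, IsOpen U → IsOpen V → IsFSigma U → IsFSigma V → Disjoint U V →
    Disjoint (closure U) (closure V)

section Aux

variable {K : Type} [TopologicalSpace K] [T2Space K]

/-- Each point of a dense embedded copy of ℕ is isolated. -/
lemma singleton_open_of_dense_embedding (e : ℕ → K) (he : Topology.IsEmbedding e)
    (hdense : DenseRange e) (n : ℕ) : IsOpen ({e n} : Set K) := by
  obtain ⟨U, hUopen, hUpre⟩ : ∃ U : Set K, IsOpen U ∧ e ⁻¹' U = {n} := by
    have : IsOpen ({n} : Set ℕ) := isOpen_discrete _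
    rw [he.isInducing.isOpen_iff] at this
    obtain ⟨U, hU, h⟩ := this
    exact ⟨U, hU, h⟩
  have h1 : U ∩ Set.range e = {e n} := by
    rw [← Set.image_preimage_eq_inter_range, hUpre, Set.image_singleton]
  have h2 : U ⊆ {e n} := by
    calc U ⊆ closure (U ∩ Set.range e) := hdense.open_subset_closure_inter hUopen
    _ = {e n} := by rw [h1, closure_singleton]
  have h3 : U = {e n} :=
    h2.antisymm (Set.singleton_subset_iff.2 (by
      have : e n ∈ U ∩ Set.range e := h1.symm ▸ rfl
      exact this.1))
  exact h3 ▸ hUopen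

/-- The image of a set of naturals under a dense embedding is open and Fσ. -/
lemma image_open_fsigma (e : ℕ → K) (he : Topology.IsEmbedding e)
    (hdense : DenseRange e) (A : Set ℕ) :
    IsOpen (e '' A) ∧ IsFSigma (e '' A) := by
  classical
  have him : e '' A = ⋃ n ∈ A, {e n} := by
    ext x
    simp only [Set.mem_image, Set.mem_iUnion, Set.mem_singleton_iff]
    exact ⟨fun ⟨n, hn, hx⟩ => ⟨n, hn, hx.symm⟩, fun ⟨n, hn, hx⟩ => ⟨n, hn, hx.symm⟩⟩
  constructor
  · rw [him]
    exact isOpen_biUnion fun n _ => singleton_open_of_dense_embedding e he hdense n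
  · refine ⟨fun n => if n ∈ A then {e n} else ∅, fun n => ?_, ?_⟩
    · by_cases hn : n ∈ A <;> simp [hn, isClosed_singleton]
    · rw [him]; ext x
      simp only [Set.mem_iUnion]
      constructor
      · rintro ⟨n, hn, hx⟩; exact ⟨n, by simp [hn, hx]⟩
      · rintro ⟨n, hx⟩
        by_cases hn : n ∈ A
        · simp only [hn, if_true] at hx; exact ⟨n, hn, hx⟩
        · simp [hn] at hx

end Aux

/-- `βℕ` is the only compactification of `ℕ` that is an F-space: if `K` is a compact
Hausdorff F-space and `e : ℕ → K` is a dense embedding, then the canonical extension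
`βℕ → K` of `e` is a homeomorphism. -/
theorem stoneCech_unique_F_space_compactification
    (K : Type) [TopologicalSpace K] [CompactSpace K] [T2Space K]
    (e : ℕ → K) (he : Topology.IsEmbedding e) (hdense : DenseRange e)
    (hF : IsFSpace K) :
    IsHomeomorph (stoneCechExtend he.continuous) := by
  set φ := stoneCechExtend he.continuous with hφ
  have hφc : Continuous φ := continuous_stoneCechExtend he.continuous
  have hext : φ ∘ stoneCechUnit = e := stoneCechExtend_extends he.continuous
  rw [isHomeomorph_iff_continuous_bijective]
  refine ⟨hφc, ?_, ?_⟩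
  · -- injective
    intro x y hxy
    by_contra hne
    obtain ⟨U, V, hU, hV, hxU, hyV, hUV⟩ := t2_separation hne
    set A : Set ℕ := stoneCechUnit ⁻¹' U
    set B : Set ℕ := stoneCechUnit ⁻¹' V
    have hAB : Disjoint A B := by
      rw [Set.disjoint_left]
      intro n hnA hnB
      exact (Set.disjoint_left.1 hUV) hnA hnB
    -- x ∈ closure (stoneCechUnit '' A)
    have hxcl : x ∈ closure (stoneCechUnit '' A) := by
      have := denseRange_stoneCechUnit.open_subset_closure_inter hU hxU
      rwa [← Set.image_preimage_eq_inter_range] at this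
    have hycl : y ∈ closure (stoneCechUnit '' B) := by
      have := denseRange_stoneCechUnit.open_subset_closure_inter hV hyV
      rwa [← Set.image_preimage_eq_inter_range] at this
    have himg : ∀ S : Set ℕ, φ '' (stoneCechUnit '' S) = e '' S := by
      intro S
      rw [← Set.image_comp, hext]
    have hφx : φ x ∈ closure (e '' A) := by
      have := image_closure_subset_closure_image (s := stoneCechUnit '' A) hφc
        (Set.mem_image_of_mem φ hxcl)
      rwa [himg] at this
    have hφy : φ y ∈ closure (e '' B) := by
      have := image_closure_subset_closure_image (s := stoneCechUnit '' B) hφc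
        (Set.mem_image_of_mem φ hycl)
      rwa [himg] at this
    obtain ⟨hAopen, hAfs⟩ := image_open_fsigma e he hdense A
    obtain ⟨hBopen, hBfs⟩ := image_open_fsigma e he hdense B
    have hdisj : Disjoint (e '' A) (e '' B) :=
      (Set.disjoint_image_iff he.injective).2 hAB
    have := hF _ _ hAopen hBopen hAfs hBfs hdisj
    exact (Set.disjoint_left.1 this) hφx (hxy ▸ hφy)
  · -- surjective
    have hclosed : IsClosed (Set.range φ) := (isCompact_range hφc).isClosed
    have hsub : Set.range e ⊆ Set.range φ := by
      rintro _ ⟨n, rfl⟩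
      exact ⟨stoneCechUnit n, congrFun hext n⟩
    have hd : Dense (Set.range φ) := hdense.mono hsub
    rw [← Set.range_eq_univ]
    rw [← hclosed.closure_eq]
    exact hd.closure_eq
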